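/- Let X be a hypersurface in 𝔸^{d+1} of multiplicity 2 at the origin with τ-invariant τ(X,0) = 1, written as x₁² + g(x₂,…,x_{d+1}) = 0 with mult g ≥ 3. If (X,0) is a top singularity, then mult g = 3 (i.e. m₂(X,0) = 3). -/

import Mathlib

/-!
STATEMENT 5: Let `X ⊆ 𝔸^{d+1}` be a hypersurface germ of multiplicity `2` at the origin
with `τ(X,0) = 1`, written (in the completed local ring) as `x₁² + g(x₂,…,x_{d+1}) = 0`
with `mult g ≥ 3`.  If `(X,0)` is a top singularity (`dim Xₘ⁰ = md+1` for all `m ≥ 1`),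
then `mult g = 3`, i.e. `m₂(X,0) = 3` (formalized: `g ∉ 𝔪⁴`).
-/

open MvPolynomial

noncomputable def jetPoly (k : Type*) [CommRing k] (N m : ℕ)
    (f : MvPolynomial (Fin N) k) (n : ℕ) : MvPolynomial (Fin N × Fin m) k :=
  (Polynomial.coeff
    (MvPolynomial.aeval
      (fun j : Fin N =>
        ∑ i : Fin m,
          Polynomial.C (MvPolynomial.X (R := k) (j, i)) * Polynomial.X ^ ((i : ℕ) + 1)) f) n)

/-- The jet equation `Fₙ⁰` of a formal power series: since each variable is substituted by a
series of `t`-order `≥ 1`, the coefficient of `tⁿ` only depends on the truncation of `f`. -/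
noncomputable def psJet (k : Type*) [CommRing k] (N m : ℕ)
    (f : MvPowerSeries (Fin N) k) (n : ℕ) : MvPolynomial (Fin N × Fin m) k :=
  jetPoly k N m
    (MvPowerSeries.trunc k (Finsupp.equivFunOnFinite.symm fun _ : Fin N => n + 1) f) n

/-- The ideal of the `m`-th jet scheme centered at the closed point of `Spec k[[x]]/I`. -/
noncomputable def psJetIdeal (k : Type*) [CommRing k] (N : ℕ)
    (I : Ideal (MvPowerSeries (Fin N) k)) (m : ℕ) :
    Ideal (MvPolynomial (Fin N × Fin m) k) :=
  Ideal.span {g | ∃ f ∈ I, ∃ n, 1 ≤ n ∧ n ≤ m ∧ g = psJet k N m f n}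

/-- The maximal ideal of the formal power series ring. -/
noncomputable def psMaxIdeal (k : Type*) [CommRing k] (n : ℕ) :
    Ideal (MvPowerSeries (Fin n) k) :=
  Ideal.span (Set.range (MvPowerSeries.X : Fin n → MvPowerSeries (Fin n) k))

/-! ### Auxiliary lemmas -/

section AuxDegree

lemma Finsupp.degree_add' {σ : Type*} (a b : σ →₀ ℕ) :
    (a + b).degree = a.degree + b.degree := by
  simp [Finsupp.degree_eq_weight_one, map_add]

end AuxDegree

section LowIdeal

variable (k : Type*) [CommRing k] (N : ℕ)

/-- The ideal of power series whose coefficients vanish in (total) degrees `< n`. -/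
noncomputable def lowIdeal (n : ℕ) : Ideal (MvPowerSeries (Fin N) k) where
  carrier := {f | ∀ e : Fin N →₀ ℕ, e.degree < n → MvPowerSeries.coeff e f = 0}
  add_mem' := fun {f g} hf hg e he => by
    rw [map_add, hf e he, hg e he, add_zero]
  zero_mem' := fun e _ => by simp
  smul_mem' := fun c f hf e he => by
    rw [smul_eq_mul, MvPowerSeries.coeff_mul]
    refine Finset.sum_eq_zero fun p hp => ?_
    rw [Finset.HasAntidiagonal.mem_antidiagonal] at hp
    have h2 : p.2.degree ≤ e.degree := by
      rw [← hp, Finsupp.degree_add']; omega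
    rw [hf p.2 (lt_of_le_of_lt h2 he), mul_zero]

lemma mem_lowIdeal_iff (n : ℕ) (f : MvPowerSeries (Fin N) k) :
    f ∈ lowIdeal k N n ↔ ∀ e : Fin N →₀ ℕ, e.degree < n → MvPowerSeries.coeff e f = 0 :=
  Iff.rfl

lemma lowIdeal_mul_le (m n : ℕ) :
    lowIdeal k N m * lowIdeal k N n ≤ lowIdeal k N (m + n) := by
  rw [Ideal.mul_le]
  intro r hr s hs
  rw [mem_lowIdeal_iff] at hr hs ⊢
  intro e he
  rw [MvPowerSeries.coeff_mul]
  refine Finset.sum_eq_zero fun p hp => ?_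
  rw [Finset.HasAntidiagonal.mem_antidiagonal] at hp
  have hdeg : p.1.degree + p.2.degree = e.degree := by
    rw [← Finsupp.degree_add', hp]
  rcases lt_or_ge p.1.degree m with h1 | h1
  · rw [hr p.1 h1, zero_mul]
  · rw [hs p.2 (by omega), mul_zero]

lemma psMaxIdeal_le_lowIdeal_one : psMaxIdeal k N ≤ lowIdeal k N 1 := by
  rw [psMaxIdeal, Ideal.span_le]
  rintro _ ⟨j, rfl⟩
  rw [SetLike.mem_coe, mem_lowIdeal_iff]
  intro e he
  have he0 : e = 0 := by
    rwa [Nat.lt_one_iff, Finsupp.degree_eq_zero_iff] at he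
  subst he0
  classical
  rw [MvPowerSeries.coeff_X, if_neg]
  intro h
  have := congrFun (congrArg (fun x : Fin N →₀ ℕ => (x : Fin N → ℕ)) h) j
  simp at this

lemma psMaxIdeal_pow_le (j : ℕ) : psMaxIdeal k N ^ j ≤ lowIdeal k N j := by
  induction j with
  | zero =>
    intro f _
    rw [mem_lowIdeal_iff]
    intro e he
    exact absurd he (Nat.not_lt_zero _)
  | succ j ih =>
    rw [pow_succ]
    exact le_trans (Ideal.mul_mono ih (psMaxIdeal_le_lowIdeal_one k N))
      (lowIdeal_mul_le k N j 1)

end LowIdeal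

section Structural

variable {k : Type*} [Field k]

/-- Every low-degree monomial of an element of `(x₀² + g)` has `x₀`-exponent at least 2. -/
lemma coeff_mem_span_structural {N : ℕ} {g f : MvPowerSeries (Fin (N + 1)) k}
    (hg : g ∈ psMaxIdeal k (N + 1) ^ 4)
    (hf : f ∈ Ideal.span {(MvPowerSeries.X 0 ^ 2 + g : MvPowerSeries (Fin (N + 1)) k)})
    (e : Fin (N + 1) →₀ ℕ) (he : e.degree ≤ 3)
    (hne : MvPowerSeries.coeff e f ≠ 0) : 2 ≤ e 0 := by
  classical
  by_contra h2
  apply hne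
  obtain ⟨c, rfl⟩ := Ideal.mem_span_singleton.mp hf
  rw [MvPowerSeries.coeff_mul]
  refine Finset.sum_eq_zero fun p hp => ?_
  rw [Finset.HasAntidiagonal.mem_antidiagonal] at hp
  have hdeg : p.1.degree + p.2.degree = e.degree := by
    rw [← Finsupp.degree_add', hp]
  have hg0 : MvPowerSeries.coeff p.1 g = 0 :=
    (mem_lowIdeal_iff k (N + 1) 4 g).mp (psMaxIdeal_pow_le k (N + 1) 4 hg) p.1 (by omega)
  rw [map_add, MvPowerSeries.coeff_X_pow, hg0, add_zero, if_neg, zero_mul]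
  intro hps
  apply h2
  have h1 : p.1 0 = 2 := by rw [hps]; simp
  have h0 : e 0 = p.1 0 + p.2 0 := by rw [← hp]; simp
  omega

end Structural

section Jet

variable {k : Type*} [Field k]

set_option maxHeartbeats 1000000 in
lemma psJet_mem_span (d : ℕ) (g : MvPowerSeries (Fin (d + 1)) k)
    (hg : g ∈ psMaxIdeal k (d + 1) ^ 4)
    (f : MvPowerSeries (Fin (d + 1)) k)
    (hf : f ∈ Ideal.span {(MvPowerSeries.X 0 ^ 2 + g : MvPowerSeries (Fin (d + 1)) k)})
    (n : ℕ) (hn : n ≤ 3) :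
    psJet k (d + 1) 3 f n ∈
      Ideal.span {(X ((0 : Fin (d + 1)), (0 : Fin 3)) : MvPolynomial (Fin (d + 1) × Fin 3) k)} := by
  classical
  set J : Ideal (MvPolynomial (Fin (d + 1) × Fin 3) k) :=
    Ideal.span {(X ((0 : Fin (d + 1)), (0 : Fin 3)) : MvPolynomial (Fin (d + 1) × Fin 3) k)} with hJ
  rw [← Ideal.Quotient.eq_zero_iff_mem]
  set p : MvPolynomial (Fin (d + 1)) k :=
    MvPowerSeries.trunc k (Finsupp.equivFunOnFinite.symm fun _ : Fin (d + 1) => n + 1) f with hp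
  show Ideal.Quotient.mk J (jetPoly k (d + 1) 3 p n) = 0
  rw [jetPoly, ← Polynomial.coeff_map]
  set s' : Fin (d + 1) → Polynomial (MvPolynomial (Fin (d + 1) × Fin 3) k ⧸ J) :=
    fun j => ∑ i : Fin 3,
      Polynomial.C (Ideal.Quotient.mk J (X (j, i))) * Polynomial.X ^ ((i : ℕ) + 1) with hs'
  have hmap :
      (MvPolynomial.aeval
        (fun j : Fin (d + 1) =>
          ∑ i : Fin 3,
            Polynomial.C (MvPolynomial.X (R := k) (j, i)) * Polynomial.X ^ ((i : ℕ) + 1)) p).map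
          (Ideal.Quotient.mk J) = MvPolynomial.aeval s' p := by
    have h1 : (MvPolynomial.aeval
        (fun j : Fin (d + 1) =>
          ∑ i : Fin 3,
            Polynomial.C (MvPolynomial.X (R := k) (j, i)) * Polynomial.X ^ ((i : ℕ) + 1)) p).map
          (Ideal.Quotient.mk J)
        = Polynomial.mapAlgHom (Ideal.Quotient.mkₐ k J)
          (MvPolynomial.aeval
            (fun j : Fin (d + 1) =>
              ∑ i : Fin 3,
                Polynomial.C (MvPolynomial.X (R := k) (j, i)) * Polynomial.X ^ ((i : ℕ) + 1))
            p) := rfl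
    have h2 : (fun j : Fin (d + 1) => Polynomial.mapAlgHom (Ideal.Quotient.mkₐ k J)
        (∑ i : Fin 3,
          Polynomial.C (MvPolynomial.X (R := k) (j, i)) * Polynomial.X ^ ((i : ℕ) + 1))) = s' := by
      funext j
      show Polynomial.map (Ideal.Quotient.mk J)
        (∑ i : Fin 3,
          Polynomial.C (MvPolynomial.X (R := k) (j, i)) * Polynomial.X ^ ((i : ℕ) + 1)) = s' j
      rw [Polynomial.map_sum]
      refine Finset.sum_congr rfl fun i _ => ?_
      rw [Polynomial.map_mul, Polynomial.map_pow, Polynomial.map_C, Polynomial.map_X]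
    rw [h1, ← h2]
    exact MvPolynomial.comp_aeval_apply (R := k) (S₁ := Polynomial (MvPolynomial (Fin (d + 1) × Fin 3) k))
      (B := Polynomial (MvPolynomial (Fin (d + 1) × Fin 3) k ⧸ J)) _ (Polynomial.mapAlgHom (Ideal.Quotient.mkₐ k J)) p
  rw [hmap]
  have hX1 : ∀ j : Fin (d + 1), (Polynomial.X : Polynomial _) ∣ s' j := by
    intro j
    refine Finset.dvd_sum fun i _ => ?_
    exact Dvd.dvd.mul_left (α := Polynomial (MvPolynomial (Fin (d + 1) × Fin 3) k ⧸ J)) (dvd_pow_self _ (Nat.succ_ne_zero _)) _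
  have hX0 : (Polynomial.X : Polynomial _) ^ 2 ∣ s' 0 := by
    have h00 : Ideal.Quotient.mk J
        (X ((0 : Fin (d + 1)), (0 : Fin 3)) : MvPolynomial (Fin (d + 1) × Fin 3) k) = 0 :=
      Ideal.Quotient.eq_zero_iff_mem.mpr (Ideal.subset_span rfl)
    show (Polynomial.X : Polynomial _) ^ 2 ∣
      ∑ i : Fin 3, Polynomial.C (Ideal.Quotient.mk J
        (X ((0 : Fin (d + 1)), i) : MvPolynomial (Fin (d + 1) × Fin 3) k))
          * Polynomial.X ^ ((i : ℕ) + 1)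
    rw [Fin.sum_univ_three]
    refine ⟨Polynomial.C (Ideal.Quotient.mk J (X ((0 : Fin (d + 1)), (1 : Fin 3))))
      + Polynomial.C (Ideal.Quotient.mk J (X ((0 : Fin (d + 1)), (2 : Fin 3)))) * Polynomial.X,
      ?_⟩
    rw [h00]
    have e1 : ((1 : Fin 3) : ℕ) = 1 := rfl
    have e2 : ((2 : Fin 3) : ℕ) = 2 := rfl
    rw [Polynomial.C_0, zero_mul, zero_add, e1, e2]
    ring
  have hdvd : (Polynomial.X : Polynomial _) ^ 4 ∣ MvPolynomial.aeval s' p := by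
    conv_rhs => rw [p.as_sum]
    rw [map_sum]
    refine Finset.dvd_sum fun e he => ?_
    rw [MvPolynomial.aeval_monomial]
    refine Dvd.dvd.mul_left (α := Polynomial (MvPolynomial (Fin (d + 1) × Fin 3) k ⧸ J)) ?_ _
    -- the monomial has nonzero coefficient in `f`
    have hce : MvPowerSeries.coeff e f ≠ 0 := by
      have hmem := MvPolynomial.mem_support_iff.mp he
      rw [hp, MvPowerSeries.coeff_trunc] at hmem
      split_ifs at hmem with h
      · exact hmem
      · exact absurd rfl hmem
    have hbound : 4 ≤ e.degree + e 0 := by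
      rcases le_or_gt e.degree 3 with h3 | h3
      · have h20 := coeff_mem_span_structural hg hf e h3 hce
        have := Finsupp.le_degree 0 e
        omega
      · omega
    have hsum : e.degree + e 0 = ∑ j ∈ e.support, (if j = 0 then 2 else 1) * e j := by
      have : ∀ j ∈ e.support,
          (if j = 0 then 2 else 1) * e j = e j + (if j = 0 then e j else 0) := by
        intro j _
        split_ifs <;> ring
      rw [Finset.sum_congr rfl this, Finset.sum_add_distrib, Finset.sum_ite_eq' e.support 0
        (fun j => e j)]
      rw [Finsupp.degree]
      by_cases h0 : (0 : Fin (d + 1)) ∈ e.support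
      · rw [if_pos h0]; rfl
      · rw [if_neg h0, Finsupp.notMem_support_iff.mp h0]; rfl
    calc (Polynomial.X : Polynomial _) ^ 4
        ∣ (Polynomial.X : Polynomial _) ^ (e.degree + e 0) := pow_dvd_pow _ hbound
      _ ∣ e.prod fun j m => s' j ^ m := by
          rw [hsum, ← Finset.prod_pow_eq_pow_sum (M := Polynomial (MvPolynomial (Fin (d + 1) × Fin 3) k ⧸ J))]
          refine Finset.prod_dvd_prod_of_dvd _ _ fun j _ => ?_
          rw [pow_mul]
          refine pow_dvd_pow_of_dvd (α := Polynomial (MvPolynomial (Fin (d + 1) × Fin 3) k ⧸ J)) ?_ (e j)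
          split_ifs with h
          · rw [h]; exact hX0
          · simpa using hX1 j
  rw [Polynomial.X_pow_dvd_iff] at hdvd
  exact hdvd n (by omega)

end Jet

section SpanXPrime

variable {k : Type*} [Field k] {σ : Type*}

lemma span_X_image_isPrime (s : Set σ) :
    (Ideal.span (MvPolynomial.X '' s : Set (MvPolynomial σ k))).IsPrime := by
  classical
  set φ : MvPolynomial σ k →ₐ[k] MvPolynomial σ k :=
    MvPolynomial.aeval (fun q => if q ∈ s then 0 else MvPolynomial.X q) with hφ
  have hker : ∀ x : MvPolynomial σ k,
      x ∈ Ideal.span (MvPolynomial.X '' s : Set (MvPolynomial σ k)) ↔ φ x = 0 := by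
    intro x
    constructor
    · intro hx
      have hle : Ideal.span (MvPolynomial.X '' s : Set (MvPolynomial σ k)) ≤
          RingHom.ker (φ : MvPolynomial σ k →+* MvPolynomial σ k) := by
        rw [Ideal.span_le]
        rintro _ ⟨q, hq, rfl⟩
        simp [RingHom.mem_ker, hφ, if_pos hq]
      exact hle hx
    · intro hx
      have hdiff : ∀ y : MvPolynomial σ k,
          y - φ y ∈ Ideal.span (MvPolynomial.X '' s : Set (MvPolynomial σ k)) := by
        intro y
        induction y using MvPolynomial.induction_on with
        | C a => simp [hφ]
        | add p q hp hq =>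
          rw [map_add]
          have : p + q - (φ p + φ q) = (p - φ p) + (q - φ q) := by ring
          rw [this]
          exact Ideal.add_mem _ hp hq
        | mul_X p j hp =>
          by_cases hj : j ∈ s
          · have h1 : p * MvPolynomial.X j ∈
                Ideal.span (MvPolynomial.X '' s : Set (MvPolynomial σ k)) :=
              Ideal.mul_mem_left _ p (Ideal.subset_span ⟨j, hj, rfl⟩)
            have h2 : φ (p * MvPolynomial.X j) = 0 := by
              rw [map_mul]
              simp [hφ, if_pos hj]
            rw [h2, sub_zero]
            exact h1
          · have h2 : φ (p * MvPolynomial.X j) = φ p * MvPolynomial.X j := by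
              rw [map_mul]
              simp [hφ, if_neg hj]
            rw [h2]
            have : p * MvPolynomial.X j - φ p * MvPolynomial.X j
                = (p - φ p) * MvPolynomial.X j := by ring
            rw [this]
            exact Ideal.mul_mem_right _ _ hp
      have := hdiff x
      rwa [hx, sub_zero] at this
  constructor
  · intro htop
    have h1 : φ 1 = 0 := (hker 1).mp (htop ▸ Submodule.mem_top)
    rw [map_one] at h1
    exact one_ne_zero h1
  · intro a b hab
    rw [hker] at hab
    rw [hker, hker]
    rw [map_mul] at hab
    exact mul_eq_zero.mp hab

end SpanXPrime

theorem top_tau_one_implies_m2_eq_three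
    (k : Type*) [Field k] [IsAlgClosed k] [CharZero k] (d : ℕ) (hd : 1 ≤ d)
    (g : MvPowerSeries (Fin (d + 1)) k)
    -- `g` involves only the variables `x₂, …, x_{d+1}`:
    (hgvars : ∀ e : Fin (d + 1) →₀ ℕ, e 0 ≠ 0 → MvPowerSeries.coeff e g = 0)
    (hg0 : g ≠ 0)
    -- `mult g ≥ 3`:
    (hg3 : g ∈ psMaxIdeal k (d + 1) ^ 3)
    -- `(X, 0)` is a top singularity, where `X` is defined by `x₁² + g = 0`:
    (htop : ∀ m : ℕ, 1 ≤ m →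
      ringKrullDim (MvPolynomial (Fin (d + 1) × Fin m) k ⧸
          psJetIdeal k (d + 1)
            (Ideal.span {(MvPowerSeries.X 0 ^ 2 + g : MvPowerSeries (Fin (d + 1)) k)}) m)
        = (m * d + 1 : ℕ)) :
    g ∉ psMaxIdeal k (d + 1) ^ 4 := by
  classical
  intro hg4
  -- the jet ideal at level 3 is contained in the ideal generated by `X (0,0)`
  set I : Ideal (MvPolynomial (Fin (d + 1) × Fin 3) k) :=
    psJetIdeal k (d + 1)
      (Ideal.span {(MvPowerSeries.X 0 ^ 2 + g : MvPowerSeries (Fin (d + 1)) k)}) 3 with hI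
  have hle : I ≤ Ideal.span
      {(X ((0 : Fin (d + 1)), (0 : Fin 3)) : MvPolynomial (Fin (d + 1) × Fin 3) k)} := by
    rw [hI, psJetIdeal, Ideal.span_le]
    rintro x ⟨f, hf, n, _hn1, hn3, rfl⟩
    exact psJet_mem_span d g hg4 f hf n hn3
  -- an ordering of the variables putting `(0,0)` first
  set ord : Fin (d + 1) × Fin 3 ≃ Fin ((d + 1) * 3) :=
    finProdFinEquiv.trans (Equiv.swap (finProdFinEquiv ((0 : Fin (d + 1)), (0 : Fin 3))) 0)
    with hord
  have hord0 : (ord ((0 : Fin (d + 1)), (0 : Fin 3)) : ℕ) = 0 := by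
    simp [hord, Equiv.swap_apply_left]
  -- the chain of prime ideals
  set P : ℕ → Ideal (MvPolynomial (Fin (d + 1) × Fin 3) k) :=
    fun i => Ideal.span (MvPolynomial.X '' {q | (ord q : ℕ) ≤ i}) with hP
  have hPprime : ∀ i, (P i).IsPrime := fun i => span_X_image_isPrime _
  have hIP : ∀ i, I ≤ P i := by
    intro i
    refine le_trans hle ?_
    rw [Ideal.span_le, Set.singleton_subset_iff]
    exact Ideal.subset_span ⟨((0 : Fin (d + 1)), (0 : Fin 3)),
      by simp only [Set.mem_setOf_eq, hord0]; exact Nat.zero_le i, rfl⟩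
  have hPlt : ∀ i i' : ℕ, i < i' → i' < (d + 1) * 3 → P i < P i' := by
    intro i i' hii hi'
    have hq : ∃ q : Fin (d + 1) × Fin 3, (ord q : ℕ) = i' :=
      ⟨ord.symm ⟨i', hi'⟩, by simp⟩
    obtain ⟨q, hq⟩ := hq
    have hmem : MvPolynomial.X q ∈ P i' :=
      Ideal.subset_span ⟨q, by simp [hq], rfl⟩
    have hnmem : MvPolynomial.X (R := k) q ∉ P i := by
      rw [hP]
      intro hmm
      rw [MvPolynomial.mem_ideal_span_X_image] at hmm
      obtain ⟨r, hr, hne⟩ := hmm (Finsupp.single q 1) (by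
        rw [MvPolynomial.mem_support_iff]
        simp [MvPolynomial.coeff_X'])
      have hrq : r = q := by
        by_contra hrq
        rw [Finsupp.single_apply, if_neg (fun h => hrq h.symm)] at hne
        exact hne rfl
      rw [hrq] at hr
      simp only [Set.mem_setOf_eq, hq] at hr
      omega
    refine lt_of_le_of_ne (Ideal.span_mono (Set.image_mono ?_)) ?_
    · intro q hq'
      simp only [Set.mem_setOf_eq] at hq' ⊢
      omega
    · intro heq
      exact hnmem (heq ▸ hmem)
  -- push the chain to the quotient ring
  set mk : MvPolynomial (Fin (d + 1) × Fin 3) k →+*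
      MvPolynomial (Fin (d + 1) × Fin 3) k ⧸ I := Ideal.Quotient.mk I with hmk
  have hkermk : RingHom.ker mk = I := Ideal.mk_ker
  have hQprime : ∀ i, ((P i).map mk).IsPrime := by
    intro i
    haveI := hPprime i
    exact Ideal.map_isPrime_of_surjective Ideal.Quotient.mk_surjective
      (by rw [hkermk]; exact hIP i)
  have hQlt : ∀ i i' : ℕ, i < i' → i' < (d + 1) * 3 → (P i).map mk < (P i').map mk := by
    intro i i' hii hi'
    have h := hPlt i i' hii hi'
    refine lt_of_le_of_ne (Ideal.map_mono h.le) ?_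
    intro heq
    have hc : ∀ j : ℕ, Ideal.comap mk ((P j).map mk) = P j := by
      intro j
      rw [Ideal.comap_map_of_surjective mk Ideal.Quotient.mk_surjective,
        ← RingHom.ker_eq_comap_bot, hkermk, sup_eq_left.mpr (hIP j)]
    have : P i = P i' := by rw [← hc i, ← hc i', heq]
    exact h.ne this
  -- the chain gives a lower bound for the Krull dimension
  set c : LTSeries (PrimeSpectrum (MvPolynomial (Fin (d + 1) × Fin 3) k ⧸ I)) :=
    { length := 3 * d + 2
      toFun := fun i => ⟨(P (i : ℕ)).map mk, hQprime _⟩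
      step := fun i => by
        show (_ : PrimeSpectrum (MvPolynomial (Fin (d + 1) × Fin 3) k ⧸ I)) < _
        rw [← PrimeSpectrum.asIdeal_lt_asIdeal]
        refine hQlt _ _ ?_ ?_
        · simp
        · have := i.2
          simp only [Fin.val_succ]
          omega } with hc
  have hlen := Order.LTSeries.length_le_krullDim c
  have hdim := htop 3 (by norm_num)
  rw [ringKrullDim] at hdim
  rw [hdim] at hlen
  have : (3 * d + 2 : ℕ) ≤ (3 * d + 1 : ℕ) := by exact_mod_cast hlen
  omega
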